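/- Structure at the bottom of an optimal parity circuit: let n ≥ 2 and let C be a minimum-size DeMorgan circuit computing XOR_n. Fix a topological order of the gates of C and let h be the first binary (∧/∨) gate in this order. Then (i) the two inputs of h are, up to negations, two distinct input variables x_i and x_j with i ≠ j, and (ii) each of x_i and x_j is read, possibly through negations, by at least two distinct binary gates of C. -/

import Mathlib

/-- A node (gate) of a DeMorgan circuit on `n` inputs: an input variable, a constant,
a negation of an earlier node, or a binary ∧/∨ of two earlier (ordered) nodes.
Nodes are referenced by their position in the gate list. -/
inductive Gate (n : ℕ) : Type
  | inp : Fin n → Gate n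
  | const : Bool → Gate n
  | not : ℕ → Gate n
  | and : ℕ → ℕ → Gate n
  | or : ℕ → ℕ → Gate n
deriving DecidableEq

/-- The (indices of the) nodes a gate reads from. -/
def Gate.refs {n : ℕ} : Gate n → List ℕ
  | .inp _ => []
  | .const _ => []
  | .not a => [a]
  | .and a b => [a, b]
  | .or a b => [a, b]

/-- A DeMorgan circuit on `n` inputs: a finite DAG of gates, presented as a list in
topological order (every gate only reads strictly earlier gates), with a designated
output node. -/
structure Circuit (n : ℕ) : Type where
  gates : List (Gate n)
  output : Fin gates.length
  wf : ∀ (i : ℕ) (g : Gate n), gates[i]? = some g → ∀ r ∈ g.refs, r < i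

/-- Value of a single gate, given the values `acc` of all earlier gates. -/
def Gate.val {n : ℕ} (x : Fin n → Bool) (acc : List Bool) : Gate n → Bool
  | .inp i => x i
  | .const b => b
  | .not a => !(acc.getD a false)
  | .and a b => acc.getD a false && acc.getD b false
  | .or a b => acc.getD a false || acc.getD b false

/-- The list of values of all gates of the circuit, in topological order. -/
def Circuit.evalList {n : ℕ} (C : Circuit n) (x : Fin n → Bool) : List Bool :=
  C.gates.foldl (fun acc g => acc ++ [g.val x acc]) []

/-- The Boolean value computed by the circuit: the value of its output node. -/
def Circuit.eval {n : ℕ} (C : Circuit n) (x : Fin n → Bool) : Bool :=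
  (C.evalList x).getD C.output false

/-- A gate is costly when it is a binary (∧/∨) gate; ¬ gates and constants are free. -/
def Gate.costly {n : ℕ} : Gate n → Bool
  | .and _ _ => true
  | .or _ _ => true
  | _ => false

/-- The size of a circuit: its number of binary (∧/∨) gates. -/
def Circuit.size {n : ℕ} (C : Circuit n) : ℕ := (C.gates.filter Gate.costly).length

/-- `C` computes the Boolean function `f`. -/
def Circuit.Computes {n : ℕ} (C : Circuit n) (f : (Fin n → Bool) → Bool) : Prop :=
  ∀ x, C.eval x = f x

/-- The DeMorgan circuit complexity of `f`: the minimum number of binary gates of a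
DeMorgan circuit computing `f`. -/
noncomputable def CC (n : ℕ) (f : (Fin n → Bool) → Bool) : ℕ :=
  sInf {s | ∃ C : Circuit n, C.Computes f ∧ C.size = s}

/-- The parity function `XOR_n(x) = (x_1 + ⋯ + x_n) mod 2`. -/
def XORf (n : ℕ) (x : Fin n → Bool) : Bool :=
  decide ((∑ i : Fin n, (if x i then 1 else 0)) % 2 = 1)

/-- `UpToNeg C a i`: node `a` of circuit `C` is, through a (possibly empty) chain of
¬ gates, the input variable `x_i`. -/
inductive UpToNeg {n : ℕ} (C : Circuit n) : ℕ → Fin n → Prop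
  | base {a : ℕ} {i : Fin n} : C.gates[a]? = some (.inp i) → UpToNeg C a i
  | neg {a a' : ℕ} {i : Fin n} :
      C.gates[a]? = some (.not a') → UpToNeg C a' i → UpToNeg C a i

/-- `ReadsVar C g i`: node `g` is a binary (∧/∨) gate of `C` one of whose inputs is,
possibly through negations, the variable `x_i`. -/
def ReadsVar {n : ℕ} (C : Circuit n) (g : ℕ) (i : Fin n) : Prop :=
  ∃ a b : ℕ,
    (C.gates[g]? = some (.and a b) ∨ C.gates[g]? = some (.or a b)) ∧
    (UpToNeg C a i ∨ UpToNeg C b i)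




namespace XorAux

variable {n : ℕ}

/-- one step of circuit evaluation -/
def step (x : Fin n → Bool) (acc : List Bool) (g : Gate n) : List Bool :=
  acc ++ [g.val x acc]

lemma foldl_prefix (x : Fin n → Bool) :
    ∀ (gs : List (Gate n)) (acc : List Bool), ∃ t, gs.foldl (step x) acc = acc ++ t := by
  intro gs
  induction gs with
  | nil => exact fun acc => ⟨[], by simp [step]⟩
  | cons g gs ih =>
    intro acc
    obtain ⟨t, ht⟩ := ih (acc ++ [g.val x acc])
    exact ⟨[g.val x acc] ++ t, by simp [List.foldl_cons, step] at ht ⊢; simp [ht, step]⟩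

lemma foldl_length (x : Fin n → Bool) :
    ∀ (gs : List (Gate n)) (acc : List Bool), (gs.foldl (step x) acc).length = acc.length + gs.length := by
  intro gs
  induction gs with
  | nil => simp
  | cons g gs ih =>
    intro acc
    rw [List.foldl_cons, ih]
    simp [step]; omega

lemma foldl_get (x : Fin n → Bool) :
    ∀ (gs : List (Gate n)) (acc : List Bool) (k : ℕ) (g : Gate n), gs[k]? = some g →
      (gs.foldl (step x) acc)[acc.length + k]? =
        some (g.val x ((gs.foldl (step x) acc).take (acc.length + k))) := by
  intro gs
  induction gs with
  | nil => intro acc k g h; simp at h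
  | cons g0 gs ih =>
    intro acc k g h
    match k with
    | 0 =>
      simp at h
      subst h
      rw [List.foldl_cons]
      obtain ⟨t, ht⟩ := foldl_prefix x gs (step x acc g0)
      rw [ht]
      simp only [step, List.append_assoc, Nat.add_zero]
      rw [List.getElem?_append_right (le_refl _), List.take_append_of_le_length (le_refl _)]
      simp
    | k + 1 =>
      simp at h
      rw [List.foldl_cons]
      have := ih (step x acc g0) k g h
      have hlen : (step x acc g0).length = acc.length + 1 := by simp [step]
      rw [hlen] at this
      have e : acc.length + (k + 1) = acc.length + 1 + k := by omega
      rw [e]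
      exact this

lemma evalList_length (C : Circuit n) (x : Fin n → Bool) :
    (C.evalList x).length = C.gates.length := by
  have := foldl_length x C.gates []
  simp only [List.length_nil, Nat.zero_add] at this
  exact this

/-- the value of node `k` of circuit `C` on input `x` -/
def v (C : Circuit n) (x : Fin n → Bool) (k : ℕ) : Bool :=
  (C.evalList x).getD k false

lemma evalList_get (C : Circuit n) (x : Fin n → Bool) (k : ℕ) (g : Gate n)
    (h : C.gates[k]? = some g) :
    (C.evalList x)[k]? = some (g.val x ((C.evalList x).take k)) := by
  have := foldl_get x C.gates [] k g h
  simp only [List.length_nil, Nat.zero_add] at this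
  exact this

lemma val_take (x : Fin n → Bool) (g : Gate n) (L : List Bool) (k : ℕ)
    (h : ∀ r ∈ g.refs, r < k) : g.val x (L.take k) = g.val x L := by
  have key : ∀ r ∈ g.refs, (L.take k).getD r false = L.getD r false := by
    intro r hr
    have : r < k := h r hr
    simp [List.getD_eq_getElem?_getD, List.getElem?_take, this]
  cases g with
  | inp i => rfl
  | const b => rfl
  | not a => simp [Gate.val, List.getD_eq_getElem?_getD] at key ⊢; rw [key a (by simp [Gate.refs])]
  | and a b =>
      simp [Gate.val, List.getD_eq_getElem?_getD] at key ⊢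
      rw [key a (by simp [Gate.refs]), key b (by simp [Gate.refs])]
  | or a b =>
      simp [Gate.val, List.getD_eq_getElem?_getD] at key ⊢
      rw [key a (by simp [Gate.refs]), key b (by simp [Gate.refs])]

lemma v_eq (C : Circuit n) (x : Fin n → Bool) (k : ℕ) (g : Gate n)
    (h : C.gates[k]? = some g) : v C x k = g.val x (C.evalList x) := by
  have h1 := evalList_get C x k g h
  have h2 : g.val x ((C.evalList x).take k) = g.val x (C.evalList x) :=
    val_take x g _ k (C.wf k g h)
  simp [v, List.getD_eq_getElem?_getD, h1, h2]

end XorAux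
namespace XorAux

variable {n : ℕ}

lemma upToNeg_lt {C : Circuit n} {k : ℕ} {i : Fin n} (h : UpToNeg C k i) :
    k < C.gates.length := by
  cases h with
  | base h => exact (List.getElem?_eq_some_iff.mp h).1
  | neg h _ => exact (List.getElem?_eq_some_iff.mp h).1

/-- the value of a node which is a variable up to negations -/
lemma upToNeg_val {C : Circuit n} {k : ℕ} {i : Fin n} (h : UpToNeg C k i) :
    ∃ c : Bool, ∀ x, v C x k = xor (x i) c := by
  induction h with
  | base h =>
    refine ⟨false, fun x => ?_⟩
    rw [v_eq C x _ _ h]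
    simp [Gate.val]
  | neg h hu ih =>
    rename_i a a' ivar
    obtain ⟨c, hc⟩ := ih
    refine ⟨!c, fun x => ?_⟩
    rw [v_eq C x _ _ h]
    simp only [Gate.val]
    have hv : (C.evalList x).getD a' false = xor (x ivar) c := hc x
    rw [hv]
    cases x ivar <;> cases c <;> rfl

/-- flipping one coordinate flips parity -/
lemma xorf_update (x : Fin n → Bool) (i : Fin n) :
    XORf n (Function.update x i (!x i)) = !(XORf n x) := by
  have h1 : (∑ k : Fin n, (if Function.update x i (!x i) k then (1:ℕ) else 0))
      = (if !x i then 1 else 0) + ∑ k ∈ Finset.univ \ {i}, (if x k then (1:ℕ) else 0) := by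
    have := Finset.sum_update_of_mem (Finset.mem_univ i)
      (fun k => if x k then (1:ℕ) else 0) (if !x i then (1:ℕ) else 0)
    rw [← this]
    refine Finset.sum_congr rfl (fun k _ => ?_)
    by_cases hk : k = i
    · subst hk; simp
    · rw [Function.update_of_ne hk, Function.update_of_ne hk]
  have h2 : (∑ k : Fin n, (if x k then (1:ℕ) else 0))
      = (if x i then 1 else 0) + ∑ k ∈ Finset.univ \ {i}, (if x k then (1:ℕ) else 0) := by
    have := Finset.sum_update_of_mem (Finset.mem_univ i)
      (fun k => if x k then (1:ℕ) else 0) (if x i then (1:ℕ) else 0)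
    rw [← this]
    refine Finset.sum_congr rfl (fun k _ => ?_)
    by_cases hk : k = i
    · subst hk; simp
    · rw [Function.update_of_ne hk]
  unfold XORf
  rw [h1, h2]
  set R := ∑ k ∈ Finset.univ \ {i}, (if x k then (1:ℕ) else 0) with hR
  rcases Nat.mod_two_eq_zero_or_one R with h | h <;>
    rcases Bool.eq_false_or_eq_true (x i) with hxi | hxi <;>
      simp [hxi, Nat.add_mod, h]

lemma exists_ne' (hn : 2 ≤ n) (i : Fin n) : ∃ j : Fin n, j ≠ i := by
  have h0 : 0 < n := by omega
  have h1 : 1 < n := by omega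
  by_cases h : i = ⟨0, h0⟩
  · exact ⟨⟨1, h1⟩, by simp [h, Fin.ext_iff]⟩
  · exact ⟨⟨0, h0⟩, fun hh => h hh.symm⟩

/-- a circuit computing XOR (n ≥ 1) is not constant -/
lemma not_const {C : Circuit n} (hn : 1 ≤ n) (hC : C.Computes (XORf n))
    (h : ∀ x y, C.eval x = C.eval y) : False := by
  have h0 : (0 : ℕ) < n := hn
  set i : Fin n := ⟨0, h0⟩
  set x : Fin n → Bool := fun _ => false
  have := xorf_update x i
  rw [← hC x, ← hC (Function.update x i (!x i)), h x (Function.update x i (!x i))] at this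
  simp at this

/-- a circuit computing XOR (n ≥ 2) does not depend on one variable only -/
lemma not_dep_one {C : Circuit n} (hn : 2 ≤ n) (hC : C.Computes (XORf n)) (i : Fin n)
    (h : ∀ x y, x i = y i → C.eval x = C.eval y) : False := by
  obtain ⟨j, hj⟩ := exists_ne' hn i
  set x : Fin n → Bool := fun _ => false
  set y : Fin n → Bool := Function.update x j (!x j)
  have hxy : x i = y i := (Function.update_of_ne (Ne.symm hj) _ _).symm
  have := xorf_update x j
  rw [← hC x, ← hC y, h x y hxy] at this
  simp at this

/-- classification of nodes below the first costly gate -/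
lemma classify {C : Circuit n} {h : ℕ}
    (hnc : ∀ k g, k < h → C.gates[k]? = some g → g.costly = false) :
    ∀ k, k < h → ∀ g, C.gates[k]? = some g →
      (∃ i, UpToNeg C k i) ∨ (∃ c, ∀ x, v C x k = c) := by
  intro k
  induction k using Nat.strong_induction_on with
  | _ k ih =>
    intro hk g hg
    cases g with
    | inp i => exact Or.inl ⟨i, UpToNeg.base hg⟩
    | const c =>
      refine Or.inr ⟨c, fun x => ?_⟩
      rw [v_eq C x _ _ hg]; rfl
    | not a =>
      have ha : a < k := C.wf k _ hg a (by simp [Gate.refs])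
      have halen : a < C.gates.length := ha.trans (List.getElem?_eq_some_iff.mp hg).1
      rcases ih a ha (ha.trans hk) (C.gates[a]'halen) (List.getElem?_eq_getElem halen) with
        ⟨i, hi⟩ | ⟨c, hc⟩
      · exact Or.inl ⟨i, UpToNeg.neg hg hi⟩
      · refine Or.inr ⟨!c, fun x => ?_⟩
        rw [v_eq C x _ _ hg]
        simp only [Gate.val]
        have hv : (C.evalList x).getD a false = c := hc x
        rw [hv]
    | and a b => exact absurd (hnc k _ hk hg) (by simp [Gate.costly])
    | or a b => exact absurd (hnc k _ hk hg) (by simp [Gate.costly])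

end XorAux
namespace XorAux

variable {n : ℕ}

/-- replace gate `h` of `C` by gate `g'` whose refs are all `< h` -/
def Circuit.replace (C : Circuit n) (h : ℕ) (g' : Gate n) (hr : ∀ r ∈ g'.refs, r < h) :
    Circuit n where
  gates := C.gates.set h g'
  output := ⟨C.output, by simpa using C.output.isLt⟩
  wf := by
    intro i g hg r hrr
    by_cases hih : i = h
    · subst hih
      have hlt : i < C.gates.length := by
        by_contra hge
        rw [List.getElem?_eq_none (by simpa using (not_lt.mp hge))] at hg
        exact absurd hg (by simp)
      rw [List.getElem?_set_self' ] at hg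
      simp [hlt] at hg
      subst hg
      exact hr r hrr
    · rw [List.getElem?_set_ne (fun e => hih e.symm)] at hg
      exact C.wf i g hg r hrr

lemma replace_evalList (C : Circuit n) (h : ℕ) (g' : Gate n) (hr : ∀ r ∈ g'.refs, r < h)
    (gold : Gate n) (hh : C.gates[h]? = some gold)
    (hval : ∀ x, g'.val x (C.evalList x) = gold.val x (C.evalList x)) (x : Fin n → Bool) :
    (Circuit.replace C h g' hr).evalList x = C.evalList x := by
  set C' := Circuit.replace C h g' hr with hC'
  have hlen : C.gates.length = C'.gates.length := by simp [hC', Circuit.replace]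
  have hL'len := evalList_length C' x
  have hLlen := evalList_length C x
  have hhlt : h < C.gates.length := (List.getElem?_eq_some_iff.mp hh).1
  apply List.ext_getElem?
  intro k
  induction k using Nat.strong_induction_on with
  | _ k ih =>
    by_cases hk : k < C.gates.length
    · -- take-prefix equality
      have htake : (C'.evalList x).take k = (C.evalList x).take k := by
        apply List.ext_getElem?
        intro m
        by_cases hm : m < k
        · rw [List.getElem?_take, List.getElem?_take, if_pos hm, if_pos hm]
          exact ih m hm
        · rw [List.getElem?_eq_none (by simp; omega), List.getElem?_eq_none (by simp; omega)]
      by_cases hkh : k = h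
      · subst hkh
        have hg' : C'.gates[k]? = some g' := by
          show (C.gates.set k g')[k]? = some g'
          rw [List.getElem?_set_self']
          simp [hhlt]
        rw [evalList_get C' x k g' hg', evalList_get C x k gold hh]
        rw [htake]
        rw [val_take x g' _ k hr, val_take x gold _ k (C.wf k gold hh)]
        rw [hval x]
      · have hgk : C'.gates[k]? = C.gates[k]? := List.getElem?_set_ne (fun e => hkh e.symm)
        have hgsome : C.gates[k]? = some (C.gates[k]'hk) := List.getElem?_eq_getElem hk
        rw [evalList_get C' x k _ (hgk.trans hgsome), evalList_get C x k _ hgsome]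
        rw [htake]
    · rw [List.getElem?_eq_none (by omega), List.getElem?_eq_none (by omega)]

lemma replace_size_lt (C : Circuit n) (h : ℕ) (g' : Gate n) (hr : ∀ r ∈ g'.refs, r < h)
    (gold : Gate n) (hh : C.gates[h]? = some gold) (hcost : gold.costly = true)
    (hnc : g'.costly = false) :
    (Circuit.replace C h g' hr).size < C.size := by
  have hhlt : h < C.gates.length := (List.getElem?_eq_some_iff.mp hh).1
  have hgold : C.gates[h]'hhlt = gold := by
    have := List.getElem?_eq_getElem hhlt
    rw [hh] at this
    exact (Option.some_inj.mp this).symm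
  have hsplit : C.gates = C.gates.take h ++ C.gates[h]'hhlt :: C.gates.drop (h+1) := by
    conv_lhs => rw [← List.take_append_drop h C.gates]
    rw [List.getElem_cons_drop]
  have hset : C.gates.set h g' = C.gates.take h ++ g' :: C.gates.drop (h+1) := by
    rw [List.set_eq_take_append_cons_drop]
    simp [hhlt]
  show ((C.gates.set h g').filter Gate.costly).length < (C.gates.filter Gate.costly).length
  rw [hset]
  conv_rhs => rw [hsplit]
  rw [List.filter_append, List.filter_append, List.filter_cons, List.filter_cons]
  rw [hgold, hcost, hnc]
  simp

/-- the master surgery lemma: an optimal circuit has no redundant binary gate -/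
lemma no_redundant (C : Circuit n) (hC : C.Computes (XORf n))
    (hmin : ∀ C' : Circuit n, C'.Computes (XORf n) → C.size ≤ C'.size)
    (h : ℕ) (gold : Gate n) (hh : C.gates[h]? = some gold) (hcost : gold.costly = true)
    (g' : Gate n) (hnc : g'.costly = false) (hr : ∀ r ∈ g'.refs, r < h)
    (hval : ∀ x, g'.val x (C.evalList x) = gold.val x (C.evalList x)) : False := by
  set C' := Circuit.replace C h g' hr with hC'def
  have hev : ∀ x, C'.eval x = C.eval x := by
    intro x
    show (C'.evalList x).getD _ false = (C.evalList x).getD _ false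
    rw [replace_evalList C h g' hr gold hh hval x]
    rfl
  have hcomp : C'.Computes (XORf n) := fun x => (hev x).trans (hC x)
  exact absurd (hmin C' hcomp) (not_le.mpr (replace_size_lt C h g' hr gold hh hcost hnc))

end XorAux
namespace XorAux

variable {n : ℕ}

lemma v_and {C : Circuit n} {h a b : ℕ} (hh : C.gates[h]? = some (.and a b)) (x : Fin n → Bool) :
    v C x h = (v C x a && v C x b) := by rw [v_eq C x _ _ hh]; rfl

lemma v_or {C : Circuit n} {h a b : ℕ} (hh : C.gates[h]? = some (.or a b)) (x : Fin n → Bool) :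
    v C x h = (v C x a || v C x b) := by rw [v_eq C x _ _ hh]; rfl

lemma surgery_const (C : Circuit n) (hC : C.Computes (XORf n))
    (hmin : ∀ C' : Circuit n, C'.Computes (XORf n) → C.size ≤ C'.size)
    (h : ℕ) (gold : Gate n) (hh : C.gates[h]? = some gold) (hcost : gold.costly = true)
    (c : Bool) (hval : ∀ x, v C x h = c) : False := by
  refine no_redundant C hC hmin h gold hh hcost (.const c) rfl (by simp [Gate.refs]) ?_
  intro x
  rw [← v_eq C x _ _ hh, hval x]
  rfl

lemma surgery_dup (C : Circuit n) (hC : C.Computes (XORf n))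
    (hmin : ∀ C' : Circuit n, C'.Computes (XORf n) → C.size ≤ C'.size)
    (h : ℕ) (gold : Gate n) (hh : C.gates[h]? = some gold) (hcost : gold.costly = true)
    (m : ℕ) (hm : m < h) (hmlen : m < C.gates.length)
    (hmnc : (C.gates[m]'hmlen).costly = false)
    (hval : ∀ x, v C x h = v C x m) : False := by
  have hmg : C.gates[m]? = some (C.gates[m]'hmlen) := List.getElem?_eq_getElem hmlen
  refine no_redundant C hC hmin h gold hh hcost (C.gates[m]'hmlen) hmnc
    (fun r hr => lt_trans (C.wf m _ hmg r hr) hm) ?_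
  intro x
  rw [← v_eq C x _ _ hh, ← v_eq C x _ _ hmg, hval x]

/-- part (i): the inputs of the first binary gate are distinct variables up to negation -/
lemma bottom_inputs (C : Circuit n) (hn : 2 ≤ n) (hC : C.Computes (XORf n))
    (hmin : ∀ C' : Circuit n, C'.Computes (XORf n) → C.size ≤ C'.size)
    (h a b : ℕ)
    (hab : C.gates[h]? = some (.and a b) ∨ C.gates[h]? = some (.or a b))
    (hfirst : ∀ k g, k < h → C.gates[k]? = some g → g.costly = false) :
    ∃ i j : Fin n, UpToNeg C a i ∧ UpToNeg C b j ∧ i ≠ j := by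
  classical
  obtain ⟨gold, hh, hcost, hvh⟩ :
      ∃ gold, C.gates[h]? = some gold ∧ gold.costly = true ∧
        ((∀ x, v C x h = (v C x a && v C x b)) ∨ (∀ x, v C x h = (v C x a || v C x b))) := by
    rcases hab with hh | hh
    · exact ⟨_, hh, rfl, Or.inl (v_and hh)⟩
    · exact ⟨_, hh, rfl, Or.inr (v_or hh)⟩
  have hhlt : h < C.gates.length := (List.getElem?_eq_some_iff.mp hh).1
  have hrefs := C.wf h gold hh
  have hrab : a < h ∧ b < h := by
    rcases hab with hh' | hh'
    · rw [hh'] at hh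
      cases hh
      exact ⟨hrefs a (by simp [Gate.refs]), hrefs b (by simp [Gate.refs])⟩
    · rw [hh'] at hh
      cases hh
      exact ⟨hrefs a (by simp [Gate.refs]), hrefs b (by simp [Gate.refs])⟩
  obtain ⟨ha, hb⟩ := hrab
  have halen : a < C.gates.length := ha.trans hhlt
  have hblen : b < C.gates.length := hb.trans hhlt
  have hanc := hfirst a _ ha (List.getElem?_eq_getElem halen)
  have hbnc := hfirst b _ hb (List.getElem?_eq_getElem hblen)
  have hca := classify hfirst a ha _ (List.getElem?_eq_getElem halen)
  have hcb := classify hfirst b hb _ (List.getElem?_eq_getElem hblen)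
  -- eliminate the case where `a` is constant
  rcases hca with ⟨i, hai⟩ | ⟨ca, hca⟩
  swap
  · exfalso
    rcases hvh with hvh | hvh
    · cases hcav : ca
      · exact surgery_const C hC hmin h gold hh hcost false
          (fun x => by rw [hvh x, hca x, hcav]; simp)
      · exact surgery_dup C hC hmin h gold hh hcost b hb hblen hbnc
          (fun x => by rw [hvh x, hca x, hcav]; simp)
    · cases hcav : ca
      · exact surgery_dup C hC hmin h gold hh hcost b hb hblen hbnc
          (fun x => by rw [hvh x, hca x, hcav]; simp)
      · exact surgery_const C hC hmin h gold hh hcost true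
          (fun x => by rw [hvh x, hca x, hcav]; simp)
  -- eliminate the case where `b` is constant
  rcases hcb with ⟨j, hbj⟩ | ⟨cb, hcb⟩
  swap
  · exfalso
    rcases hvh with hvh | hvh
    · cases hcbv : cb
      · exact surgery_const C hC hmin h gold hh hcost false
          (fun x => by rw [hvh x, hcb x, hcbv]; simp)
      · exact surgery_dup C hC hmin h gold hh hcost a ha halen hanc
          (fun x => by rw [hvh x, hcb x, hcbv]; simp)
    · cases hcbv : cb
      · exact surgery_dup C hC hmin h gold hh hcost a ha halen hanc
          (fun x => by rw [hvh x, hcb x, hcbv]; simp)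
      · exact surgery_const C hC hmin h gold hh hcost true
          (fun x => by rw [hvh x, hcb x, hcbv]; simp)
  refine ⟨i, j, hai, hbj, ?_⟩
  -- eliminate i = j
  rintro rfl
  obtain ⟨pa, hpa⟩ := upToNeg_val hai
  obtain ⟨pb, hpb⟩ := upToNeg_val hbj
  by_cases hpab : pa = pb
  · subst hpab
    rcases hvh with hvh | hvh
    · exact surgery_dup C hC hmin h gold hh hcost a ha halen hanc
        (fun x => by rw [hvh x, hpa x, hpb x]; simp)
    · exact surgery_dup C hC hmin h gold hh hcost a ha halen hanc
        (fun x => by rw [hvh x, hpa x, hpb x]; simp)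
  · have hpb' : pb = !pa := by cases pa <;> cases pb <;> simp_all
    subst hpb'
    rcases hvh with hvh | hvh
    · exact surgery_const C hC hmin h gold hh hcost false
        (fun x => by rw [hvh x, hpa x, hpb x]; cases x i <;> cases pa <;> rfl)
    · exact surgery_const C hC hmin h gold hh hcost true
        (fun x => by rw [hvh x, hpa x, hpb x]; cases x i <;> cases pa <;> rfl)

end XorAux
namespace XorAux

variable {n : ℕ}

/-- part (ii): a variable entering the first gate is read by a second binary gate -/
lemma read_twice (C : Circuit n) (hn : 2 ≤ n) (hC : C.Computes (XORf n))
    (h a b p q : ℕ) (i j : Fin n) (hij : i ≠ j)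
    (hab : C.gates[h]? = some (.and a b) ∨ C.gates[h]? = some (.or a b))
    (hp : UpToNeg C p i) (hq : UpToNeg C q j)
    (hpq : (p = a ∧ q = b) ∨ (p = b ∧ q = a)) :
    ∃ g₂, g₂ ≠ h ∧ ReadsVar C g₂ i := by
  by_contra hcon
  push_neg at hcon
  have honly : ∀ g, ReadsVar C g i → g = h := by
    intro g hg
    by_contra hne
    exact hcon g hne hg
  obtain ⟨cq, hcq⟩ := upToNeg_val hq
  obtain ⟨kv, cval, hkill⟩ : ∃ kv cval : Bool, ∀ x : Fin n → Bool, x j = kv → v C x h = cval := by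
    rcases hab with hh | hh
    · refine ⟨cq, false, fun x hx => ?_⟩
      rw [v_and hh]
      have hq0 : v C x q = false := by rw [hcq x, hx]; cases cq <;> rfl
      rcases hpq with ⟨hp', hq'⟩ | ⟨hp', hq'⟩
      · rw [← hq', hq0]; simp
      · rw [← hq', hq0]; simp
    · refine ⟨!cq, true, fun x hx => ?_⟩
      rw [v_or hh]
      have hq0 : v C x q = true := by rw [hcq x, hx]; cases cq <;> rfl
      rcases hpq with ⟨hp', hq'⟩ | ⟨hp', hq'⟩
      · rw [← hq', hq0]; simp
      · rw [← hq', hq0]; simp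
  classical
  set x₀ : Fin n → Bool := fun k => if k = j then kv else false with hx₀
  set x₁ : Fin n → Bool := Function.update x₀ i true with hx₁
  have hx₀i : x₀ i = false := by simp [hx₀, hij]
  have hx₀j : x₀ j = kv := by simp [hx₀]
  have hx₁j : x₁ j = kv := by
    rw [hx₁, Function.update_of_ne (Ne.symm hij), hx₀j]
  have hagree : ∀ k : Fin n, k ≠ i → x₀ k = x₁ k := by
    intro k hk
    rw [hx₁, Function.update_of_ne hk]
  have claim : ∀ k, ∀ g : Gate n, C.gates[k]? = some g →
      UpToNeg C k i ∨ v C x₀ k = v C x₁ k := by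
    intro k
    induction k using Nat.strong_induction_on with
    | _ k ih =>
      intro g hg
      have hklen : k < C.gates.length := (List.getElem?_eq_some_iff.mp hg).1
      cases g with
      | inp i' =>
        by_cases hii : i' = i
        · subst hii; exact Or.inl (UpToNeg.base hg)
        · refine Or.inr ?_
          rw [v_eq C x₀ _ _ hg, v_eq C x₁ _ _ hg]
          exact hagree i' hii
      | const c =>
        refine Or.inr ?_
        rw [v_eq C x₀ _ _ hg, v_eq C x₁ _ _ hg]
        rfl
      | not a' =>
        have ha' : a' < k := C.wf k _ hg a' (by simp [Gate.refs])
        have ha'len : a' < C.gates.length := ha'.trans hklen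
        rcases ih a' ha' _ (List.getElem?_eq_getElem ha'len) with hu | hv
        · exact Or.inl (UpToNeg.neg hg hu)
        · refine Or.inr ?_
          rw [v_eq C x₀ _ _ hg, v_eq C x₁ _ _ hg]
          show (!(v C x₀ a')) = (!(v C x₁ a'))
          rw [hv]
      | and a' b' =>
        by_cases hu : UpToNeg C a' i ∨ UpToNeg C b' i
        · have hk : k = h := honly k ⟨a', b', Or.inl hg, hu⟩
          subst hk
          exact Or.inr ((hkill x₀ hx₀j).trans (hkill x₁ hx₁j).symm)
        · push_neg at hu
          have ha' : a' < k := C.wf k _ hg a' (by simp [Gate.refs])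
          have hb' : b' < k := C.wf k _ hg b' (by simp [Gate.refs])
          rcases ih a' ha' _ (List.getElem?_eq_getElem (ha'.trans hklen)) with hua | hva
          · exact absurd hua hu.1
          rcases ih b' hb' _ (List.getElem?_eq_getElem (hb'.trans hklen)) with hub | hvb
          · exact absurd hub hu.2
          refine Or.inr ?_
          rw [v_eq C x₀ _ _ hg, v_eq C x₁ _ _ hg]
          show (v C x₀ a' && v C x₀ b') = (v C x₁ a' && v C x₁ b')
          rw [hva, hvb]
      | or a' b' =>
        by_cases hu : UpToNeg C a' i ∨ UpToNeg C b' i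
        · have hk : k = h := honly k ⟨a', b', Or.inr hg, hu⟩
          subst hk
          exact Or.inr ((hkill x₀ hx₀j).trans (hkill x₁ hx₁j).symm)
        · push_neg at hu
          have ha' : a' < k := C.wf k _ hg a' (by simp [Gate.refs])
          have hb' : b' < k := C.wf k _ hg b' (by simp [Gate.refs])
          rcases ih a' ha' _ (List.getElem?_eq_getElem (ha'.trans hklen)) with hua | hva
          · exact absurd hua hu.1
          rcases ih b' hb' _ (List.getElem?_eq_getElem (hb'.trans hklen)) with hub | hvb
          · exact absurd hub hu.2
          refine Or.inr ?_
          rw [v_eq C x₀ _ _ hg, v_eq C x₁ _ _ hg]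
          show (v C x₀ a' || v C x₀ b') = (v C x₁ a' || v C x₁ b')
          rw [hva, hvb]
  rcases claim (C.output : ℕ) _ (List.getElem?_eq_getElem C.output.isLt) with hu | hv
  · obtain ⟨c, hc⟩ := upToNeg_val hu
    exact not_dep_one hn hC i (fun x y hxy => by
      show v C x (C.output : ℕ) = v C y (C.output : ℕ)
      rw [hc x, hc y, hxy])
  · have hev : C.eval x₀ = C.eval x₁ := hv
    have hxor : XORf n x₁ = !(XORf n x₀) := by
      have : x₁ = Function.update x₀ i (!x₀ i) := by rw [hx₀i]; rfl
      rw [this]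
      exact xorf_update x₀ i
    rw [hC x₀, hC x₁, hxor] at hev
    cases XORf n x₀ <;> simp at hev

/-- a circuit computing XOR (n ≥ 2) has at least one binary gate -/
lemma exists_costly (C : Circuit n) (hn : 2 ≤ n) (hC : C.Computes (XORf n)) :
    ∃ k : ℕ, ∃ g : Gate n, C.gates[k]? = some g ∧ g.costly = true := by
  by_contra hcon
  have hnc : ∀ k g, k < C.gates.length → C.gates[k]? = some g → g.costly = false := by
    intro k g _ hg
    by_contra hne
    exact hcon ⟨k, g, hg, by simpa using hne⟩
  rcases classify hnc (C.output : ℕ) C.output.isLt _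
      (List.getElem?_eq_getElem C.output.isLt) with ⟨i, hi⟩ | ⟨c, hc⟩
  · obtain ⟨p, hp⟩ := upToNeg_val hi
    exact not_dep_one hn hC i (fun x y hxy => by
      show v C x (C.output : ℕ) = v C y (C.output : ℕ)
      rw [hp x, hp y, hxy])
  · exact not_const (by omega) hC (fun x y => by
      show v C x (C.output : ℕ) = v C y (C.output : ℕ)
      rw [hc x, hc y])

end XorAux


/-- Structure at the bottom of an optimal parity circuit: if `n ≥ 2` and
`C` is a minimum-size DeMorgan circuit computing `XOR_n` (whose gate list fixes a
topological order), then the first binary gate `h` in this order has as its two inputs,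
up to negations, two distinct variables `x_i` and `x_j` (`i ≠ j`), and each of `x_i`,
`x_j` is read (possibly through negations) by at least two distinct binary gates. -/
theorem optimal_xor_bottom_structure :
    ∀ n : ℕ, 2 ≤ n → ∀ C : Circuit n, C.Computes (XORf n) →
      (∀ C' : Circuit n, C'.Computes (XORf n) → C.size ≤ C'.size) →
      ∃ (h a b : ℕ) (i j : Fin n),
        (C.gates[h]? = some (.and a b) ∨ C.gates[h]? = some (.or a b)) ∧
        (∀ (h' : ℕ) (g : Gate n), h' < h → C.gates[h']? = some g → g.costly = false) ∧
        UpToNeg C a i ∧ UpToNeg C b j ∧ i ≠ j ∧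
        (∃ g₁ g₂ : ℕ, g₁ ≠ g₂ ∧ ReadsVar C g₁ i ∧ ReadsVar C g₂ i) ∧
        (∃ g₁ g₂ : ℕ, g₁ ≠ g₂ ∧ ReadsVar C g₁ j ∧ ReadsVar C g₂ j) := by
  intro n hn C hC hmin
  classical
  have hex := XorAux.exists_costly C hn hC
  set h := Nat.find hex with hhdef
  have hspec := Nat.find_spec hex
  obtain ⟨gold, hh, hcost⟩ := hspec
  have hfirst : ∀ (h' : ℕ) (g : Gate n), h' < h → C.gates[h']? = some g → g.costly = false := by
    intro h' g hlt hg
    have := Nat.find_min hex hlt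
    push_neg at this
    have := this g hg
    simpa using this
  obtain ⟨a, b, hab⟩ : ∃ a b : ℕ,
      C.gates[h]? = some (.and a b) ∨ C.gates[h]? = some (.or a b) := by
    cases gold with
    | inp i => simp [Gate.costly] at hcost
    | const c => simp [Gate.costly] at hcost
    | not a => simp [Gate.costly] at hcost
    | and a b => exact ⟨a, b, Or.inl hh⟩
    | or a b => exact ⟨a, b, Or.inr hh⟩
  obtain ⟨i, j, hai, hbj, hij⟩ := XorAux.bottom_inputs C hn hC hmin h a b hab hfirst
  have hreadhi : ReadsVar C h i := ⟨a, b, hab, Or.inl hai⟩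
  have hreadhj : ReadsVar C h j := ⟨a, b, hab, Or.inr hbj⟩
  obtain ⟨gi, hgi, hri⟩ := XorAux.read_twice C hn hC h a b a b i j hij hab hai hbj (Or.inl ⟨rfl, rfl⟩)
  obtain ⟨gj, hgj, hrj⟩ := XorAux.read_twice C hn hC h a b b a j i (Ne.symm hij) hab hbj hai (Or.inr ⟨rfl, rfl⟩)
  exact ⟨h, a, b, i, j, hab, hfirst, hai, hbj, hij,
    ⟨h, gi, Ne.symm hgi, hreadhi, hri⟩, ⟨h, gj, Ne.symm hgj, hreadhj, hrj⟩⟩
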